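/- arXiv:2508.06247 — 4 statements merged into one kernel-verified Lean document; each statement's English description precedes it below -/
import Mathlib

section
/- Let $X_1, X_2, \ldots$ be i.i.d. random variables in $[0,1]$ with mean $\mu$, let $\hat\mu_{t} = \frac{1}{t}\sum_{s=1}^t X_s$ and $\rho_{t} = \sqrt{\frac{1}{t}\ln^+\left(\frac{1}{\delta t}\right)}$ where $\ln^+(x) = \ln\max\{1, x\}$ and $\delta > 0$. Define $\zeta = \max\left(0, \mu - \min_{t \leq T}(\hat\mu_{t} + \rho_{t})\right)$. Then for any $\varepsilon > 0$, $\Pr[\zeta \geq \varepsilon] \leq \frac{4\delta}{\varepsilon^2}$. -/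
set_option maxHeartbeats 1000000

open MeasureTheory ProbabilityTheory

section Aux
open Real


lemma hoeffding_scalar {p : ℝ} (hp0 : 0 ≤ p) (hp1 : p ≤ 1) {t : ℝ} (ht : t ≤ 0) :
    Real.log (1 - p + p * Real.exp t) ≤ p * t + t ^ 2 / 8 := by
  have hD : ∀ x : ℝ, 0 < 1 - p + p * Real.exp x := by
    intro x; have h1 := Real.exp_pos x
    rcases eq_or_lt_of_le hp0 with h | h
    · simp [← h]
    · nlinarith
  set F : ℝ → ℝ := fun x => p * x + x ^ 2 / 8 - Real.log (1 - p + p * Real.exp x) with hFdef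
  set F' : ℝ → ℝ := fun x => p + x / 4 - p * Real.exp x / (1 - p + p * Real.exp x) with hF'def
  have hexp : ∀ x : ℝ, HasDerivAt (fun x : ℝ => 1 - p + p * Real.exp x) (p * Real.exp x) x := by
    intro x
    exact ((Real.hasDerivAt_exp x).const_mul p).const_add (1 - p)
  have hdF : ∀ x, HasDerivAt F (F' x) x := by
    intro x
    have hlog := (hexp x).log (ne_of_gt (hD x))
    have h1 : HasDerivAt (fun x : ℝ => p * x + x ^ 2 / 8) (p + x / 4) x := by
      have h2 := (hasDerivAt_id x).const_mul p
      have h3 := (hasDerivAt_pow 2 x).div_const 8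
      have := h2.add h3
      refine this.congr_deriv ?_
      norm_num
      ring
    exact h1.sub hlog
  have hdF' : ∀ x, HasDerivAt F'
      (1 / 4 - (p * Real.exp x * (1 - p + p * Real.exp x) -
        p * Real.exp x * (p * Real.exp x)) / (1 - p + p * Real.exp x) ^ 2) x := by
    intro x
    have hnum : HasDerivAt (fun x : ℝ => p * Real.exp x) (p * Real.exp x) x :=
      (Real.hasDerivAt_exp x).const_mul p
    have hdiv := hnum.div (hexp x) (ne_of_gt (hD x))
    have h1 : HasDerivAt (fun x : ℝ => p + x / 4) (1 / 4) x := by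
      simpa using ((hasDerivAt_id x).div_const 4).const_add p
    exact h1.sub hdiv
  have hF''nonneg : ∀ x : ℝ, 0 ≤ 1 / 4 - (p * Real.exp x * (1 - p + p * Real.exp x) -
      p * Real.exp x * (p * Real.exp x)) / (1 - p + p * Real.exp x) ^ 2 := by
    intro x
    rw [sub_nonneg, div_le_iff₀ (pow_pos (hD x) 2)]
    nlinarith [sq_nonneg (1 - p - p * Real.exp x), Real.exp_pos x, hD x]
  have hmono : Monotone F' :=
    monotone_of_deriv_nonneg (fun x => (hdF' x).differentiableAt)
      (fun x => by rw [(hdF' x).deriv]; exact hF''nonneg x)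
  have hF'0 : F' 0 = 0 := by
    simp only [hF'def, Real.exp_zero, mul_one]
    field_simp
    ring
  have hF'nonpos : ∀ x ≤ (0 : ℝ), F' x ≤ 0 := fun x hx => hF'0 ▸ hmono hx
  have hanti : AntitoneOn F (Set.Iic 0) := by
    refine antitoneOn_of_deriv_nonpos (convex_Iic 0) ?_ ?_ ?_
    · exact (Differentiable.continuous (fun x => (hdF x).differentiableAt)).continuousOn
    · exact fun x _ => (hdF x).differentiableAt.differentiableWithinAt
    · intro x hx
      rw [interior_Iic] at hx
      rw [(hdF x).deriv]
      exact hF'nonpos x (le_of_lt hx)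
  have h0 : F 0 = 0 := by
    simp [hFdef]
  have := hanti (Set.mem_Iic.2 ht) (Set.mem_Iic.2 le_rfl) ht
  rw [h0] at this
  simp only [hFdef] at this
  linarith

lemma mgf_step {Ω : Type*} [MeasureSpace Ω] [IsProbabilityMeasure (ℙ : Measure Ω)]
    {X : Ω → ℝ} (hX : Measurable X) (hb : ∀ᵐ ω ∂ℙ, X ω ∈ Set.Icc (0:ℝ) 1)
    {μ : ℝ} (hmean : ∫ ω, X ω ∂ℙ = μ) {l : ℝ} (hl : 0 ≤ l) :
    ∫ ω, Real.exp (l * (μ - X ω)) ∂ℙ ≤ Real.exp (l ^ 2 / 8) := by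
  have hint : Integrable X ℙ := by
    refine Integrable.mono' (integrable_const 1) hX.aestronglyMeasurable ?_
    filter_upwards [hb] with ω hω
    rw [Real.norm_eq_abs, abs_le]
    exact ⟨by linarith [hω.1], hω.2⟩
  have hμ0 : 0 ≤ μ := by
    rw [← hmean]
    exact integral_nonneg_of_ae (hb.mono fun ω hω => hω.1)
  have hμ1 : μ ≤ 1 := by
    rw [← hmean]
    calc ∫ ω, X ω ∂ℙ ≤ ∫ _ω, (1:ℝ) ∂ℙ :=
          integral_mono_ae hint (integrable_const 1) (hb.mono fun ω hω => hω.2)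
      _ = 1 := by simp
  have hpt : ∀ᵐ ω ∂ℙ, Real.exp (l * (μ - X ω)) ≤
      Real.exp (l * μ) * ((1 - X ω) + X ω * Real.exp (-l)) := by
    filter_upwards [hb] with ω hω
    have hconv := convexOn_exp.2 (Set.mem_univ (0:ℝ)) (Set.mem_univ (-l))
      (sub_nonneg.2 hω.2) hω.1 (by ring)
    simp only [smul_eq_mul, mul_zero, zero_add, Real.exp_zero, mul_one] at hconv
    have h1 : Real.exp (l * (μ - X ω)) = Real.exp (l * μ) * Real.exp (X ω * -l) := by
      rw [← Real.exp_add]; ring_nf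
    rw [h1]
    have := mul_le_mul_of_nonneg_left hconv (Real.exp_nonneg (l * μ))
    linarith
  have hintL : Integrable (fun ω => Real.exp (l * (μ - X ω))) ℙ := by
    refine Integrable.mono' (integrable_const (Real.exp (l * μ)))
      ((hX.const_sub μ |>.const_mul l).exp.aestronglyMeasurable) ?_
    filter_upwards [hb] with ω hω
    rw [Real.norm_eq_abs, abs_of_pos (Real.exp_pos _)]
    exact Real.exp_le_exp.2 (by nlinarith [hω.1])
  have hintR : Integrable (fun ω => Real.exp (l * μ) * ((1 - X ω) + X ω * Real.exp (-l))) ℙ :=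
    (((integrable_const (1:ℝ)).sub hint).add (hint.mul_const _)).const_mul _
  have hmono := integral_mono_ae hintL hintR hpt
  have hR : ∫ ω, Real.exp (l * μ) * ((1 - X ω) + X ω * Real.exp (-l)) ∂ℙ =
      Real.exp (l * μ) * ((1 - μ) + μ * Real.exp (-l)) := by
    rw [integral_const_mul]
    have h2 : (fun a : Ω => 1 - X a + X a * Real.exp (-l))
        = fun a => 1 + (Real.exp (-l) - 1) * X a := by funext a; ring
    rw [h2, integral_add (integrable_const 1) (hint.const_mul _), integral_const_mul, hmean,
      integral_const]
    simp only [measure_univ, ENNReal.toReal_one, probReal_univ, smul_eq_mul, one_mul]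
    ring
  rw [hR] at hmono
  have hD : 0 < 1 - μ + μ * Real.exp (-l) := by
    have h1 := Real.exp_pos (-l)
    rcases eq_or_lt_of_le hμ0 with h | h
    · simp [← h]
    · nlinarith
  have hlog := hoeffding_scalar hμ0 hμ1 (t := -l) (neg_nonpos.2 hl)
  calc ∫ ω, Real.exp (l * (μ - X ω)) ∂ℙ ≤ Real.exp (l * μ) * ((1 - μ) + μ * Real.exp (-l)) :=
        hmono
    _ = Real.exp (l * μ + Real.log (1 - μ + μ * Real.exp (-l))) := by
        rw [Real.exp_add, Real.exp_log hD]
    _ ≤ Real.exp (l ^ 2 / 8) := by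
        refine Real.exp_le_exp.2 ?_
        have : μ * -l + (-l) ^ 2 / 8 = -(l * μ) + l ^ 2 / 8 := by ring
        linarith [hlog, this ▸ hlog]

lemma maximal_hoeffding {Ω : Type*} [MeasureSpace Ω] [IsProbabilityMeasure (ℙ : Measure Ω)]
    (X : ℕ → Ω → ℝ) (μ : ℝ)
    (hmeas : ∀ s, Measurable (X s))
    (hindep : iIndepFun X ℙ)
    (hbound : ∀ s, ∀ᵐ ω ∂ℙ, X s ω ∈ Set.Icc (0:ℝ) 1)
    (hmean : ∀ s, ∫ ω, X s ω ∂ℙ = μ)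
    (n : ℕ) (hn : 1 ≤ n) (c : ℝ) (hc : 0 < c) :
    (ℙ {ω | ∃ t, 1 ≤ t ∧ t ≤ n ∧ c ≤ ∑ s ∈ Finset.range t, (μ - X s ω)}).toReal
      ≤ Real.exp (-2 * c ^ 2 / n) := by
  have hn0 : (0:ℝ) < n := by exact_mod_cast hn
  set l : ℝ := 4 * c / n with hldef
  have hl : 0 < l := by positivity
  have hball : ∀ᵐ ω ∂ℙ, ∀ s, X s ω ∈ Set.Icc (0:ℝ) 1 := ae_all_iff.2 hbound
  have hμ1 : μ ≤ 1 := by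
    rw [← hmean 0]
    calc ∫ ω, X 0 ω ∂ℙ ≤ ∫ _ω, (1:ℝ) ∂ℙ := by
          refine integral_mono_ae ?_ (integrable_const 1) ((hbound 0).mono fun ω hω => hω.2)
          refine Integrable.mono' (integrable_const 1) (hmeas 0).aestronglyMeasurable ?_
          filter_upwards [hbound 0] with ω hω
          rw [Real.norm_eq_abs, abs_le]; exact ⟨by linarith [hω.1], hω.2⟩
      _ = 1 := by simp
  set S : ℕ → Ω → ℝ := fun t ω => ∑ s ∈ Finset.range t, (μ - X s ω) with hSdef
  set f : ℕ → Ω → ℝ := fun t ω => Real.exp (l * S t ω) with hfdef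
  set g : ℕ → Ω → ℝ := fun i ω => Real.exp (l * (μ - X i ω)) with hgdef
  -- the filtration generated by X 0, ..., X (i-1)
  set ℱ : Filtration ℕ (inferInstance : MeasurableSpace Ω) :=
    { seq := fun i => ⨆ j ∈ Set.Iio i, MeasurableSpace.comap (X j) inferInstance
      mono' := fun i k hik => biSup_mono fun j hj => lt_of_lt_of_le hj hik
      le' := fun i => iSup₂_le fun j _ => (hmeas j).comap_le } with hFdef
  have hSmeasF : ∀ i, Measurable[ℱ i] (S i) := by
    intro i
    refine Finset.measurable_sum _ fun j hj => ?_
    have hj' : j ∈ Set.Iio i := Finset.mem_range.1 hj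
    have hle : MeasurableSpace.comap (X j) inferInstance ≤ ℱ i :=
      le_biSup (fun j => MeasurableSpace.comap (X j) inferInstance) hj'
    exact measurable_const.sub ((comap_measurable (X j)).mono hle le_rfl)
  have hfmeasF : ∀ i, StronglyMeasurable[ℱ i] (f i) := fun i =>
    (((hSmeasF i).const_mul l).exp).stronglyMeasurable
  have hSmeas : ∀ t, Measurable (S t) := fun t =>
    Finset.measurable_sum _ fun j _ => measurable_const.sub (hmeas j)
  have hSle : ∀ t, ∀ᵐ ω ∂ℙ, S t ω ≤ t := by
    intro t
    filter_upwards [hball] with ω hω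
    calc S t ω ≤ ∑ _s ∈ Finset.range t, (1:ℝ) :=
          Finset.sum_le_sum fun s _ => by linarith [(hω s).1]
      _ = t := by simp
  have hint : ∀ t, Integrable (f t) ℙ := by
    intro t
    refine Integrable.mono' (integrable_const (Real.exp (l * t)))
      (((hSmeas t).const_mul l).exp).aestronglyMeasurable ?_
    filter_upwards [hSle t] with ω hω
    rw [Real.norm_eq_abs, abs_of_pos (Real.exp_pos _)]
    exact Real.exp_le_exp.2 (mul_le_mul_of_nonneg_left hω hl.le)
  have hg_int : ∀ i, Integrable (g i) ℙ := by
    intro i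
    refine Integrable.mono' (integrable_const (Real.exp (l * μ)))
      ((measurable_const.sub (hmeas i)).const_mul l).exp.aestronglyMeasurable ?_
    filter_upwards [hbound i] with ω hω
    rw [Real.norm_eq_abs, abs_of_pos (Real.exp_pos _)]
    exact Real.exp_le_exp.2 (mul_le_mul_of_nonneg_left (by linarith [hω.1]) hl.le)
  have hkey : ∀ i, f (i + 1) = f i * g i := by
    intro i
    funext ω
    show Real.exp (l * S (i+1) ω) = Real.exp (l * S i ω) * Real.exp (l * (μ - X i ω))
    rw [← Real.exp_add]
    congr 1
    have : S (i+1) ω = S i ω + (μ - X i ω) := Finset.sum_range_succ _ i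
    rw [this]; ring
  have hindep_i : ∀ i, Indep (MeasurableSpace.comap (X i) inferInstance) (ℱ i) ℙ := by
    intro i
    have h := indep_iSup_of_disjoint (m := fun k => MeasurableSpace.comap (X k) inferInstance)
      (fun k => (hmeas k).comap_le) hindep
      (S := {i}) (T := Set.Iio i) (by simp [Set.disjoint_left])
    rwa [iSup_singleton] at h
  have hgmeasC : ∀ i, StronglyMeasurable[MeasurableSpace.comap (X i) inferInstance] (g i) := by
    intro i
    exact (((measurable_const.sub (comap_measurable (X i))).const_mul l).exp).stronglyMeasurable
  have hEg : ∀ i, 1 ≤ ∫ ω, g i ω ∂ℙ := by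
    intro i
    have hintX : Integrable (X i) ℙ := by
      refine Integrable.mono' (integrable_const 1) (hmeas i).aestronglyMeasurable ?_
      filter_upwards [hbound i] with ω hω
      rw [Real.norm_eq_abs, abs_le]; exact ⟨by linarith [hω.1], hω.2⟩
    have hi1 : Integrable (fun ω => μ - X i ω) ℙ := by
      exact (integrable_const μ).sub hintX
    have hi2 : Integrable (fun ω => l * (μ - X i ω)) ℙ := hi1.const_mul l
    have h0 : ∫ ω, (1 + l * (μ - X i ω)) ∂ℙ = 1 := by
      rw [integral_add (integrable_const 1) hi2, integral_const_mul,
        integral_sub (integrable_const μ) hintX, integral_const, hmean i]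
      simp
    rw [← h0]
    refine integral_mono_ae (by exact (integrable_const 1).add hi2) (hg_int i) ?_
    filter_upwards with ω
    have := Real.add_one_le_exp (l * (μ - X i ω))
    linarith
  have hstep : ∀ i, f i ≤ᵐ[ℙ] ℙ[f (i + 1)|ℱ i] := by
    intro i
    have h1 : ℙ[f i * g i|ℱ i] =ᵐ[ℙ] f i * ℙ[g i|ℱ i] :=
      condExp_mul_of_stronglyMeasurable_left (hfmeasF i) (hkey i ▸ hint (i+1)) (hg_int i)
    have h2 : ℙ[g i|ℱ i] =ᵐ[ℙ] fun _ => ∫ ω, g i ω ∂ℙ :=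
      condExp_indep_eq (hmeas i).comap_le (ℱ.le i) (hgmeasC i) (hindep_i i)
    rw [hkey i]
    filter_upwards [h1, h2.mono fun ω hω => hω] with ω e1 e2
    rw [e1]
    show f i ω ≤ f i ω * (ℙ[g i|ℱ i]) ω
    rw [e2]
    nlinarith [Real.exp_pos (l * S i ω), hEg i]
  have hsub : Submartingale f ℱ ℙ := submartingale_nat (fun i => hfmeasF i) hint hstep
  have hnn : (0 : ℕ → Ω → ℝ) ≤ f := fun t ω => (Real.exp_pos _).le
  set ε' : NNReal := (Real.exp (l * c)).toNNReal with hε'def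
  have hε'coe : (ε' : ℝ) = Real.exp (l * c) := Real.coe_toNNReal _ (Real.exp_pos _).le
  have hdoob := maximal_ineq hsub hnn (ε := ε') n
  set B : Set Ω := {ω | (ε' : ℝ) ≤
    (Finset.range (n + 1)).sup' Finset.nonempty_range_add_one fun k => f k ω} with hBdef
  have hAB : {ω | ∃ t, 1 ≤ t ∧ t ≤ n ∧ c ≤ ∑ s ∈ Finset.range t, (μ - X s ω)} ⊆ B := by
    rintro ω ⟨t, ht1, htn, hct⟩
    have h1 : Real.exp (l * c) ≤ f t ω :=
      Real.exp_le_exp.2 (mul_le_mul_of_nonneg_left hct hl.le)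
    have h2 : f t ω ≤ (Finset.range (n + 1)).sup' Finset.nonempty_range_add_one fun k => f k ω :=
      Finset.le_sup' (fun k => f k ω) (Finset.mem_range.2 (Nat.lt_succ_of_le htn))
    exact Set.mem_setOf.2 (by rw [hε'coe]; linarith)
  -- bound the integral of f n by the mgf product
  set Y : ℕ → Ω → ℝ := fun i ω => μ - X i ω with hYdef
  have hYindep : iIndepFun Y ℙ :=
    hindep.comp (fun _ x => μ - x) (fun _ => measurable_const.sub measurable_id)
  have hfn_eq : ∫ ω, f n ω ∂ℙ = mgf (∑ i ∈ Finset.range n, Y i) ℙ l := by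
    refine integral_congr_ae (Filter.Eventually.of_forall fun ω => ?_)
    show Real.exp (l * S n ω) = Real.exp (l * (∑ i ∈ Finset.range n, Y i) ω)
    rw [Finset.sum_apply]
  have hprod : mgf (∑ i ∈ Finset.range n, Y i) ℙ l ≤ Real.exp (n * l ^ 2 / 8) := by
    rw [hYindep.mgf_sum (fun i => measurable_const.sub (hmeas i)) (Finset.range n)]
    calc ∏ i ∈ Finset.range n, mgf (Y i) ℙ l
        ≤ ∏ _i ∈ Finset.range n, Real.exp (l ^ 2 / 8) := by
          refine Finset.prod_le_prod (fun i _ => mgf_nonneg) (fun i _ => ?_)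
          exact mgf_step (hmeas i) (hbound i) (hmean i) hl.le
      _ = Real.exp (l ^ 2 / 8) ^ n := by rw [Finset.prod_const, Finset.card_range]
      _ = Real.exp (n * (l ^ 2 / 8)) := by rw [← Real.exp_nat_mul]
      _ = Real.exp (n * l ^ 2 / 8) := by ring_nf
  have hIB : ∫ ω in B, f n ω ∂ℙ ≤ Real.exp (n * l ^ 2 / 8) := by
    calc ∫ ω in B, f n ω ∂ℙ ≤ ∫ ω, f n ω ∂ℙ :=
          setIntegral_le_integral (hint n) (Filter.Eventually.of_forall fun ω => (Real.exp_pos _).le)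
      _ ≤ Real.exp (n * l ^ 2 / 8) := hfn_eq ▸ hprod
  have hIB0 : 0 ≤ ∫ ω in B, f n ω ∂ℙ := integral_nonneg fun ω => (Real.exp_pos _).le
  have hBtoReal : Real.exp (l * c) * (ℙ B).toReal ≤ Real.exp (n * l ^ 2 / 8) := by
    have h := ENNReal.toReal_mono ENNReal.ofReal_ne_top hdoob
    rw [ENNReal.toReal_mul, ENNReal.coe_toReal, ENNReal.toReal_ofReal hIB0] at h
    calc Real.exp (l * c) * (ℙ B).toReal = ε' • (ℙ B).toReal := by
          rw [NNReal.smul_def, smul_eq_mul, hε'coe]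
      _ ≤ ∫ ω in B, f n ω ∂ℙ := h
      _ ≤ _ := hIB
  have hfinal : (ℙ B).toReal ≤ Real.exp (-2 * c ^ 2 / n) := by
    have hexp : Real.exp (n * l ^ 2 / 8) / Real.exp (l * c) = Real.exp (-2 * c ^ 2 / n) := by
      rw [← Real.exp_sub]
      congr 1
      rw [hldef]
      field_simp
      ring
    rw [← hexp, le_div_iff₀ (Real.exp_pos _)]
    linarith [hBtoReal]
  calc (ℙ {ω | ∃ t, 1 ≤ t ∧ t ≤ n ∧ c ≤ ∑ s ∈ Finset.range t, (μ - X s ω)}).toReal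
      ≤ (ℙ B).toReal := ENNReal.toReal_mono (measure_ne_top _ _) (measure_mono hAB)
    _ ≤ Real.exp (-2 * c ^ 2 / n) := hfinal

end Aux

section Main
open Real

lemma clog_aux {t : ℕ} (ht : 1 ≤ t) : (2:ℕ) ^ Nat.clog 2 t ≤ 2 * t := by
  rcases eq_or_lt_of_le ht with h | h
  · simp [← h]
  · have h2 : 2 ≤ t := h
    have h3 : 2 ^ (Nat.clog 2 t - 1) < t := by
      simpa [Nat.pred_eq_sub_one] using Nat.pow_pred_clog_lt_self (by norm_num : 1 < 2) h2
    have h4 : 1 ≤ Nat.clog 2 t := Nat.clog_pos (by norm_num) h2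
    have h5 : 2 ^ Nat.clog 2 t = 2 * 2 ^ (Nat.clog 2 t - 1) := by
      rw [← pow_succ']
      congr 1
      omega
    omega

end Main

/-- MOSS-style underestimation tail bound: for i.i.d. rewards in `[0,1]` with mean `μ`,
the probability that the UCB ever underestimates `μ` by more than `ε` over horizon `T`
is at most `4δ/ε²`. -/
theorem stmt4
    {Ω : Type*} [MeasureSpace Ω] [IsProbabilityMeasure (ℙ : Measure Ω)]
    (X : ℕ → Ω → ℝ) (μ δ : ℝ) (hδ : 0 < δ) (T : ℕ) (hT : 1 ≤ T)
    (hmeas : ∀ s, Measurable (X s))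
    (hindep : iIndepFun X ℙ)
    (hident : ∀ s, Measure.map (X s) ℙ = Measure.map (X 0) ℙ)
    (hbound : ∀ s, ∀ᵐ ω ∂ℙ, X s ω ∈ Set.Icc (0 : ℝ) 1)
    (hmean : ∀ s, ∫ ω, X s ω ∂ℙ = μ)
    (hatμ : ℕ → Ω → ℝ)
    (hhat : ∀ t ω, hatμ t ω = (∑ s ∈ Finset.range t, X s ω) / t)
    (ρ : ℕ → ℝ)
    (hρ : ∀ t : ℕ, ρ t = Real.sqrt ((1 / t) * Real.log (max 1 (1 / (δ * t)))))
    (ζ : Ω → ℝ)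
    (hζ : ∀ ω, ζ ω = max 0 (μ -
      (Finset.Icc 1 T).inf' (Finset.nonempty_Icc.mpr hT) (fun t => hatμ t ω + ρ t)))
    (ε : ℝ) (hε : 0 < ε) :
    (ℙ {ω | ε ≤ ζ ω}).toReal ≤ 4 * δ / ε ^ 2 := by
  set J : ℕ := Nat.clog 2 T with hJdef
  set L : ℕ → ℝ := fun j => Real.log (max 1 (1 / (δ * 2 ^ j))) with hLdef
  set cst : ℕ → ℝ := fun j => (2:ℝ) ^ j * ε / 2 + Real.sqrt ((2:ℝ) ^ j * L j / 2) with hcdef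
  set A : ℕ → Set Ω := fun j =>
    {ω | ∃ t, 1 ≤ t ∧ t ≤ 2 ^ j ∧ cst j ≤ ∑ s ∈ Finset.range t, (μ - X s ω)} with hAdef
  set E : ℕ → ℝ := fun j => Real.exp (-((2:ℝ) ^ j * ε ^ 2 / 4)) with hEdef
  have hL0 : ∀ j, 0 ≤ L j := fun j => Real.log_nonneg (le_max_left _ _)
  have hP : ∀ j : ℕ, (0:ℝ) < 2 ^ j := fun j => by positivity
  have hc0 : ∀ j, 0 < cst j := fun j =>
    add_pos_of_pos_of_nonneg (div_pos (mul_pos (hP j) hε) two_pos) (Real.sqrt_nonneg _)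
  have hEmono : ∀ j, E (j+1) ≤ E j := by
    intro j
    refine Real.exp_le_exp.2 ?_
    have : (2:ℝ) ^ (j+1) = 2 * 2 ^ j := by ring
    rw [this]
    nlinarith [hP j, sq_nonneg ε]
  have hE0 : ∀ j, 0 < E j := fun j => Real.exp_pos _
  -- the per-block tail bound
  have hAj : ∀ j, (ℙ (A j)).toReal ≤ 4 * δ / ε ^ 2 * (E j - E (j+1)) := by
    intro j
    have h1 := maximal_hoeffding X μ hmeas hindep hbound hmean (2 ^ j)
      (Nat.one_le_two_pow) (cst j) (hc0 j)
    have hcast : ((2 ^ j : ℕ) : ℝ) = (2:ℝ) ^ j := by push_cast; ring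
    rw [hcast] at h1
    refine h1.trans ?_
    -- exp bound
    have hb2 : Real.sqrt ((2:ℝ) ^ j * L j / 2) ^ 2 = (2:ℝ) ^ j * L j / 2 :=
      Real.sq_sqrt (by have := hL0 j; positivity)
    have hexp1 : -2 * cst j ^ 2 / (2:ℝ) ^ j ≤ -(L j) + -((2:ℝ) ^ j * ε ^ 2 / 2) := by
      rw [div_le_iff₀ (hP j)]
      have hsq : cst j ^ 2 ≥ ((2:ℝ) ^ j * ε / 2) ^ 2 + ((2:ℝ) ^ j * L j / 2) := by
        rw [hcdef]
        simp only
        rw [add_sq, hb2]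
        have hnn : 0 ≤ 2 * ((2:ℝ) ^ j * ε / 2) * Real.sqrt ((2:ℝ) ^ j * L j / 2) := by
          have := Real.sqrt_nonneg ((2:ℝ) ^ j * L j / 2)
          have := (hP j).le
          positivity
        linarith
      nlinarith [hP j, hsq]
    have hexp2 : Real.exp (-(L j)) ≤ δ * 2 ^ j := by
      have hM : (1:ℝ) ≤ max 1 (1 / (δ * 2 ^ j)) := le_max_left _ _
      have hMpos : (0:ℝ) < max 1 (1 / (δ * 2 ^ j)) := by linarith
      rw [Real.exp_neg, hLdef]
      simp only
      rw [Real.exp_log hMpos]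
      rw [inv_le_comm₀ hMpos (by positivity)]
      calc (δ * 2 ^ j : ℝ)⁻¹ = 1 / (δ * 2 ^ j) := by rw [one_div]
        _ ≤ max 1 (1 / (δ * 2 ^ j)) := le_max_right _ _
    calc Real.exp (-2 * cst j ^ 2 / (2:ℝ) ^ j)
        ≤ Real.exp (-(L j)) * Real.exp (-((2:ℝ) ^ j * ε ^ 2 / 2)) := by
          rw [← Real.exp_add]; exact Real.exp_le_exp.2 hexp1
      _ ≤ δ * 2 ^ j * Real.exp (-((2:ℝ) ^ j * ε ^ 2 / 2)) := by
          exact mul_le_mul_of_nonneg_right hexp2 (Real.exp_pos _).le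
      _ ≤ 4 * δ / ε ^ 2 * (E j - E (j+1)) := by
          -- telescoping step:  with a = 2^j ε²/4, need δ 4a/ε² e^{-2a} ≤ 4δ/ε² (e^{-a} - e^{-2a})
          set a : ℝ := (2:ℝ) ^ j * ε ^ 2 / 4 with hadef
          have ha : 0 < a := by positivity
          have hkey := Real.add_one_le_exp a
          have hu : Real.exp (-((2:ℝ) ^ j * ε ^ 2 / 2)) = Real.exp (-a) * Real.exp (-a) := by
            rw [← Real.exp_add]; congr 1; rw [hadef]; ring
          have hEj : E j = Real.exp (-a) := rfl
          have hEj1 : E (j+1) = Real.exp (-a) * Real.exp (-a) := by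
            rw [hEdef]
            simp only
            rw [← Real.exp_add]
            congr 1
            rw [hadef]
            ring
          have hP2 : δ * (2:ℝ) ^ j = 4 * δ / ε ^ 2 * a := by
            rw [hadef]; field_simp
          rw [hu, hEj, hEj1, hP2]
          have hupos : 0 < Real.exp (-a) := Real.exp_pos _
          have hinv : Real.exp a * Real.exp (-a) = 1 := by
            rw [← Real.exp_add]; simp
          have h4 : 0 ≤ 4 * δ / ε ^ 2 := by positivity
          have hmain : a * (Real.exp (-a) * Real.exp (-a)) ≤
              Real.exp (-a) - Real.exp (-a) * Real.exp (-a) := by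
            nlinarith [hkey, hupos, hinv]
          nlinarith [hmain, h4]
  -- event inclusion
  have hsubset : {ω | ε ≤ ζ ω} ⊆ ⋃ j ∈ Finset.range (J+1), A j := by
    intro ω hω
    rw [Set.mem_setOf_eq, hζ ω] at hω
    have hω' : ε ≤ μ - (Finset.Icc 1 T).inf' (Finset.nonempty_Icc.mpr hT)
        (fun t => hatμ t ω + ρ t) := by
      rcases le_max_iff.1 hω with h | h
      · linarith
      · exact h
    obtain ⟨t, htmem, hteq⟩ := Finset.exists_mem_eq_inf' (Finset.nonempty_Icc.mpr hT)
      (fun t => hatμ t ω + ρ t)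
    rw [hteq] at hω'
    obtain ⟨ht1, htT⟩ := Finset.mem_Icc.1 htmem
    set j : ℕ := Nat.clog 2 t with hjdef
    have hjJ : j ≤ J := Nat.clog_mono_right 2 htT
    have htle : t ≤ 2 ^ j := Nat.le_pow_clog (by norm_num) t
    have ht0 : (0:ℝ) < t := by exact_mod_cast ht1
    have hpow2t : ((2:ℝ)) ^ j ≤ 2 * t := by
      have := clog_aux ht1
      exact_mod_cast this
    have htle' : (t:ℝ) ≤ (2:ℝ) ^ j := by exact_mod_cast htle
    -- sum identity
    have hsum : ∑ s ∈ Finset.range t, (μ - X s ω) = t * (μ - hatμ t ω) := by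
      rw [Finset.sum_sub_distrib, Finset.sum_const, Finset.card_range, nsmul_eq_mul,
        hhat t ω]
      field_simp
    -- t * ρ t = sqrt (t * Lt)
    set Lt : ℝ := Real.log (max 1 (1 / (δ * t))) with hLtdef
    have hLt0 : 0 ≤ Lt := Real.log_nonneg (le_max_left _ _)
    have hρt : (t:ℝ) * ρ t = Real.sqrt (t * Lt) := by
      have h1 : (t:ℝ) * Real.sqrt (1/t * Lt) = Real.sqrt ((t:ℝ)^2 * (1/t * Lt)) := by
        conv_rhs => rw [Real.sqrt_mul (sq_nonneg _), Real.sqrt_sq ht0.le]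
      have h2 : (t:ℝ)^2 * (1/t * Lt) = (t:ℝ) * Lt := by field_simp
      rw [hρ t, ← hLtdef, h1, h2]
    -- L j ≤ Lt
    have hLle : L j ≤ Lt := by
      refine Real.log_le_log (by positivity) ?_
      refine max_le_max le_rfl ?_
      refine one_div_le_one_div_of_le (by positivity) ?_
      exact mul_le_mul_of_nonneg_left htle' hδ.le
    have hsqrtle : Real.sqrt ((2:ℝ) ^ j * L j / 2) ≤ (t:ℝ) * ρ t := by
      rw [hρt]
      refine Real.sqrt_le_sqrt ?_
      calc (2:ℝ) ^ j * L j / 2 = ((2:ℝ) ^ j / 2) * L j := by ring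
        _ ≤ (t:ℝ) * Lt := by
            refine mul_le_mul (by linarith) hLle (hL0 j) ht0.le
    have hcle : cst j ≤ ∑ s ∈ Finset.range t, (μ - X s ω) := by
      rw [hsum]
      have h1 : (2:ℝ) ^ j * ε / 2 ≤ t * ε := by nlinarith
      have h2 : ρ t + ε ≤ μ - hatμ t ω := by linarith
      have h3 : (t:ℝ) * (ρ t + ε) ≤ t * (μ - hatμ t ω) :=
        mul_le_mul_of_nonneg_left h2 ht0.le
      have h4 : cst j ≤ (t:ℝ) * (ρ t + ε) := by
        calc cst j = (2:ℝ) ^ j * ε / 2 + Real.sqrt ((2:ℝ) ^ j * L j / 2) := rfl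
          _ ≤ (t:ℝ) * ε + (t:ℝ) * ρ t := add_le_add h1 hsqrtle
          _ = (t:ℝ) * (ρ t + ε) := by ring
      exact h4.trans h3
    exact Set.mem_iUnion₂.2 ⟨j, Finset.mem_range.2 (Nat.lt_succ_of_le hjJ),
      ⟨t, ht1, htle, hcle⟩⟩
  -- putting it together
  have hbnn : ∀ j, 0 ≤ 4 * δ / ε ^ 2 * (E j - E (j+1)) := by
    intro j
    have := hEmono j
    have : (0:ℝ) ≤ E j - E (j+1) := by linarith
    positivity
  have hmeasle : ℙ {ω | ε ≤ ζ ω} ≤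
      ∑ j ∈ Finset.range (J+1), ENNReal.ofReal (4 * δ / ε ^ 2 * (E j - E (j+1))) := by
    calc ℙ {ω | ε ≤ ζ ω} ≤ ℙ (⋃ j ∈ Finset.range (J+1), A j) := measure_mono hsubset
      _ ≤ ∑ j ∈ Finset.range (J+1), ℙ (A j) := measure_biUnion_finset_le _ _
      _ ≤ ∑ j ∈ Finset.range (J+1), ENNReal.ofReal (4 * δ / ε ^ 2 * (E j - E (j+1))) := by
          refine Finset.sum_le_sum fun j _ => ?_
          rw [ENNReal.le_ofReal_iff_toReal_le (measure_ne_top _ _) (hbnn j)]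
          exact hAj j
  have hsum_eq : ∑ j ∈ Finset.range (J+1), 4 * δ / ε ^ 2 * (E j - E (j+1)) =
      4 * δ / ε ^ 2 * (E 0 - E (J+1)) := by
    rw [← Finset.mul_sum, Finset.sum_range_sub']
  have hfinal_sum : ∑ j ∈ Finset.range (J+1), 4 * δ / ε ^ 2 * (E j - E (j+1)) ≤
      4 * δ / ε ^ 2 := by
    rw [hsum_eq]
    have hE0le : E 0 ≤ 1 := by
      rw [hEdef]
      simp only [pow_zero, one_mul]
      rw [Real.exp_le_one_iff]
      nlinarith [sq_nonneg ε]
    have := hE0 (J+1)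
    have h4 : 0 ≤ 4 * δ / ε ^ 2 := by positivity
    nlinarith
  calc (ℙ {ω | ε ≤ ζ ω}).toReal
      ≤ (∑ j ∈ Finset.range (J+1),
          ENNReal.ofReal (4 * δ / ε ^ 2 * (E j - E (j+1)))).toReal := by
        refine ENNReal.toReal_mono ?_ hmeasle
        refine (ENNReal.sum_lt_top.2 fun j _ => ENNReal.ofReal_lt_top).ne
    _ = ∑ j ∈ Finset.range (J+1), 4 * δ / ε ^ 2 * (E j - E (j+1)) := by
        rw [← ENNReal.ofReal_sum_of_nonneg (fun j _ => hbnn j)]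
        rw [ENNReal.toReal_ofReal (Finset.sum_nonneg fun j _ => hbnn j)]
    _ ≤ 4 * δ / ε ^ 2 := hfinal_sum
end

section
/- Let $X_1, \ldots, X_n$ be independent random variables in $[0,1]$ with common mean $\mu$, let $\hat\mu_t = \frac{1}{t}\sum_{s=1}^t X_s$. Fix $a > 1$ and $\varepsilon \in (0,1)$, and define $\kappa = \sum_{t=1}^T \mathbb{1}\{\hat\mu_t + \sqrt{a/t} - \mu \geq \varepsilon\}$. Then for any integer $T > 1$, $\mathbb{E}[\kappa] \leq \frac{3a}{\varepsilon^2}$. -/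
open MeasureTheory ProbabilityTheory

set_option maxHeartbeats 1000000

section Stmt7Aux

open Real intervalIntegral

-- Hoeffding's lemma stmt7_core: for p∈[0,1], λ≥0: 1-p+p e^λ ≤ exp(pλ+λ²/8)
lemma stmt7_core (p : ℝ) (hp0 : 0 ≤ p) (hp1 : p ≤ 1) (l : ℝ) (hl : 0 ≤ l) :
    1 - p + p * exp l ≤ exp (p * l + l ^ 2 / 8) := by
  have hg : ∀ x : ℝ, 0 < 1 - p + p * exp x := by
    intro x
    rcases eq_or_lt_of_le hp0 with h | h
    · simp [← h]
    · have := exp_pos x; nlinarith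
  set F : ℝ → ℝ := fun x => p * x + x ^ 2 / 8 - Real.log (1 - p + p * exp x) with hF
  set F' : ℝ → ℝ := fun x => p + x / 4 - p * exp x / (1 - p + p * exp x) with hF'
  have hgd : ∀ x, HasDerivAt (fun y => 1 - p + p * exp y) (p * exp x) x := by
    intro x
    simpa using (((Real.hasDerivAt_exp x).const_mul p).const_add (1 - p))
  have hFd : ∀ x, HasDerivAt F (F' x) x := by
    intro x
    have h1 : HasDerivAt (fun y : ℝ => p * y + y ^ 2 / 8) (p + 2 * x / 8) x := by
      exact (((hasDerivAt_id x).const_mul p).add ((hasDerivAt_pow 2 x).div_const 8)).congr_deriv (by simp)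
    have h2 : HasDerivAt (fun y => Real.log (1 - p + p * exp y))
        (p * exp x / (1 - p + p * exp x)) x := (hgd x).log (hg x).ne'
    have := h1.sub h2
    refine this.congr_deriv ?_
    simp [hF']; ring
  have hF'd : ∀ x, HasDerivAt F'
      ((1 : ℝ) / 4 - (p * exp x / (1 - p + p * exp x) -
        (p * exp x / (1 - p + p * exp x)) ^ 2)) x := by
    intro x
    have h1 : HasDerivAt (fun y : ℝ => p + y / 4) (1 / 4) x := by
      simpa using ((hasDerivAt_id x).div_const 4).const_add p
    have h2 : HasDerivAt (fun y => p * exp y / (1 - p + p * exp y))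
        ((p * exp x * (1 - p + p * exp x) - p * exp x * (p * exp x)) /
          (1 - p + p * exp x) ^ 2) x :=
      ((Real.hasDerivAt_exp x).const_mul p).div (hgd x) (hg x).ne'
    have := h1.sub h2
    refine this.congr_deriv ?_
    have hgx := (hg x).ne'
    field_simp
  have hF'mono : Monotone F' := by
    refine monotone_of_deriv_nonneg (fun x => (hF'd x).differentiableAt) (fun x => ?_)
    rw [(hF'd x).deriv]
    set q := p * exp x / (1 - p + p * exp x)
    nlinarith [sq_nonneg (q - 1/2)]
  have hF'0 : F' 0 = 0 := by simp [hF']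
  have hF'nonneg : ∀ x, 0 ≤ x → 0 ≤ F' x := fun x hx => hF'0 ▸ hF'mono hx
  have hFmono : MonotoneOn F (Set.Ici 0) := by
    refine monotoneOn_of_deriv_nonneg (convex_Ici 0)
      (fun x _ => (hFd x).differentiableAt.continuousAt.continuousWithinAt)
      (fun x _ => (hFd x).differentiableAt.differentiableWithinAt) (fun x hx => ?_)
    rw [(hFd x).deriv]
    exact hF'nonneg x (le_of_lt (by simpa using hx))
  have hF0 : F 0 = 0 := by simp [hF]
  have : 0 ≤ F l := hF0 ▸ hFmono Set.self_mem_Ici hl (by exact hl)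
  have hlog : Real.log (1 - p + p * exp l) ≤ p * l + l ^ 2 / 8 := by
    simp only [hF] at this; linarith
  calc 1 - p + p * exp l = exp (Real.log (1 - p + p * exp l)) := (exp_log (hg l)).symm
    _ ≤ _ := exp_le_exp.2 hlog

-- single-variable mgf bound + stmt7_chernoff for sums
lemma stmt7_chernoff
    {Ω : Type*} [MeasureSpace Ω] [IsProbabilityMeasure (ℙ : Measure Ω)]
    (X : ℕ → Ω → ℝ) (μ : ℝ)
    (hmeas : ∀ s, Measurable (X s))
    (hindep : iIndepFun X ℙ)
    (hbound : ∀ s, ∀ᵐ ω ∂ℙ, X s ω ∈ Set.Icc (0 : ℝ) 1)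
    (hmean : ∀ s, ∫ ω, X s ω ∂ℙ = μ)
    (t : ℕ) (l b : ℝ) (hl : 0 ≤ l) :
    (ℙ {ω | b ≤ ∑ s ∈ Finset.range t, X s ω}).toReal ≤
      exp (-l * b + t * (μ * l + l ^ 2 / 8)) := by
  have hμ0 : 0 ≤ μ := by
    rw [← hmean 0]
    exact integral_nonneg_of_ae ((hbound 0).mono fun ω h => h.1)
  have hμ1 : μ ≤ 1 := by
    rw [← hmean 0]
    calc ∫ ω, X 0 ω ∂ℙ ≤ ∫ _ω, (1:ℝ) ∂ℙ := by
          refine integral_mono_ae ?_ (integrable_const 1) ((hbound 0).mono fun ω h => h.2)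
          exact ⟨(hmeas 0).aestronglyMeasurable,
            HasFiniteIntegral.of_bounded (C := 1) ((hbound 0).mono fun ω h => by
              rw [Real.norm_eq_abs, abs_le]; exact ⟨by linarith [h.1], h.2⟩)⟩
      _ = 1 := by simp
  -- integrability of exp (l * X s)
  have hint : ∀ s, Integrable (fun ω => exp (l * X s ω)) ℙ := by
    intro s
    refine ⟨(((hmeas s).const_mul l).exp).aestronglyMeasurable,
      HasFiniteIntegral.of_bounded (C := exp l) (((hbound s)).mono fun ω h => ?_)⟩
    rw [Real.norm_eq_abs, abs_of_pos (exp_pos _)]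
    exact exp_le_exp.2 (by nlinarith [h.1, h.2])
  -- mgf bound per variable
  have hmgf : ∀ s, mgf (X s) ℙ l ≤ exp (μ * l + l ^ 2 / 8) := by
    intro s
    have hXint : Integrable (X s) ℙ := ⟨(hmeas s).aestronglyMeasurable,
      HasFiniteIntegral.of_bounded (C := 1) ((hbound s).mono fun ω h => by
        rw [Real.norm_eq_abs, abs_le]; exact ⟨by linarith [h.1], h.2⟩)⟩
    have step1 : mgf (X s) ℙ l ≤ ∫ ω, (1 - X s ω + X s ω * exp l) ∂ℙ := by
      refine integral_mono_ae (hint s) ?_ (((hbound s)).mono fun ω h => ?_)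
      · exact ((integrable_const 1).sub hXint).add (hXint.mul_const _)
      · -- convexity: exp (l * x) ≤ 1 - x + x * exp l for x ∈ [0,1]
        have := convexOn_exp.2 (Set.mem_univ (0:ℝ)) (Set.mem_univ l)
          (by linarith [h.2] : (0:ℝ) ≤ 1 - X s ω) h.1 (by ring)
        simpa [smul_eq_mul, mul_comm] using this
    have step2 : ∫ ω, (1 - X s ω + X s ω * exp l) ∂ℙ = 1 - μ + μ * exp l := by
      rw [integral_add (by exact (integrable_const 1).sub hXint) (hXint.mul_const _),
        integral_sub (integrable_const 1) hXint, MeasureTheory.integral_mul_const, hmean s]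
      simp
    exact step1.trans (step2 ▸ stmt7_core μ hμ0 hμ1 l hl)
  -- stmt7_chernoff
  have hsum : (fun ω => ∑ s ∈ Finset.range t, X s ω) = ∑ s ∈ Finset.range t, X s := by
    ext ω; simp
  have h1 : (ℙ {ω | b ≤ ∑ s ∈ Finset.range t, X s ω}).toReal ≤
      exp (-l * b) * mgf (∑ s ∈ Finset.range t, X s) ℙ l := by
    have := measure_ge_le_exp_mul_mgf (μ := ℙ) (X := ∑ s ∈ Finset.range t, X s) b hl
      (hindep.integrable_exp_mul_sum hmeas (fun i _ => hint i))
    simpa [hsum, measureReal_def] using this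
  have h2 : mgf (∑ s ∈ Finset.range t, X s) ℙ l ≤ exp (t * (μ * l + l ^ 2 / 8)) := by
    rw [hindep.mgf_sum hmeas]
    calc ∏ s ∈ Finset.range t, mgf (X s) ℙ l
        ≤ ∏ _s ∈ Finset.range t, exp (μ * l + l ^ 2 / 8) :=
          Finset.prod_le_prod (fun i _ => mgf_nonneg) (fun i _ => hmgf i)
      _ = exp (t * (μ * l + l ^ 2 / 8)) := by
          rw [Finset.prod_const, ← Real.exp_nat_mul]; simp
  calc (ℙ {ω | b ≤ ∑ s ∈ Finset.range t, X s ω}).toReal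
      ≤ exp (-l * b) * mgf (∑ s ∈ Finset.range t, X s) ℙ l := h1
    _ ≤ exp (-l * b) * exp (t * (μ * l + l ^ 2 / 8)) := by
        exact mul_le_mul_of_nonneg_left h2 (exp_pos _).le
    _ = exp (-l * b + t * (μ * l + l ^ 2 / 8)) := (exp_add _ _).symm

-- Part C: the numeric sum bound
lemma stmt7_sumbound (a ε : ℝ) (ha : 1 < a) (hε : 0 < ε) (hε1 : ε < 1) (T : ℕ)
    (p : ℕ → ℝ) (hple : ∀ t, p t ≤ 1)
    (hpf : ∀ t : ℕ, a ≤ t * ε ^ 2 →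
      p t ≤ exp (-2 * (Real.sqrt t * ε - Real.sqrt a) ^ 2)) :
    ∑ t ∈ Finset.Icc 1 T, p t ≤ 3 * a / ε ^ 2 := by
  have hε2 : (0:ℝ) < ε ^ 2 := by positivity
  set c : ℝ := a / ε ^ 2 with hc
  have hc1 : 1 ≤ c := by
    rw [hc, le_div_iff₀ hε2]; nlinarith
  have hc0 : 0 ≤ c := by linarith
  set k : ℕ := ⌊c⌋₊ with hk
  have hkc : (k : ℝ) ≤ c := Nat.floor_le hc0
  have hck : c < k + 1 := Nat.lt_floor_add_one c
  have hk1 : 1 ≤ k := Nat.le_floor (by exact_mod_cast hc1)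
  have hsa : (0:ℝ) < Real.sqrt a := Real.sqrt_pos.2 (by linarith)
  have hsa1 : (1:ℝ) ≤ Real.sqrt a := by
    rw [show (1:ℝ) = Real.sqrt 1 by simp]; exact Real.sqrt_le_sqrt (by linarith)
  have hsaa : Real.sqrt a ^ 2 = a := Real.sq_sqrt (by linarith)
  set r : ℝ := Real.sqrt a / ε with hr
  have hr2 : r ^ 2 = c := by rw [hr, div_pow, hsaa]
  have hr0 : 0 < r := by positivity
  -- F : the bound function on reals
  set F : ℝ → ℝ := fun s => exp (-2 * (Real.sqrt s * ε - Real.sqrt a) ^ 2) with hF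
  have hF1 : ∀ s, F s ≤ 1 := fun s => by
    rw [hF]; simp only []
    exact Real.exp_le_one_iff.2 (by nlinarith [sq_nonneg (Real.sqrt s * ε - Real.sqrt a)])
  have hF0 : ∀ s, 0 ≤ F s := fun s => (exp_pos _).le
  have hFcont : Continuous F := by
    apply Real.continuous_exp.comp
    exact (continuous_const.mul (((Real.continuous_sqrt.mul continuous_const).sub
      continuous_const).pow 2))
  have hsqrtc : ∀ u : ℝ, c ≤ u → Real.sqrt a ≤ Real.sqrt u * ε := by
    intro u hu
    have h1 : Real.sqrt c ≤ Real.sqrt u := Real.sqrt_le_sqrt hu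
    have h2 : Real.sqrt c = r := by
      rw [← hr2, Real.sqrt_sq hr0.le]
    rw [h2, hr] at h1
    calc Real.sqrt a = Real.sqrt a / ε * ε := by field_simp
      _ ≤ Real.sqrt u * ε := by nlinarith
  have hant : ∀ u v : ℝ, c ≤ u → u ≤ v → F v ≤ F u := by
    intro u v hu huv
    rw [hF]; simp only []
    apply Real.exp_le_exp.2
    have h1 : Real.sqrt a ≤ Real.sqrt u * ε := hsqrtc u hu
    have h2 : Real.sqrt u ≤ Real.sqrt v := Real.sqrt_le_sqrt huv
    have h3 : Real.sqrt u * ε ≤ Real.sqrt v * ε := mul_le_mul_of_nonneg_right h2 hε.le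
    nlinarith [h1, h3]
  -- the integral bound
  have intbound : ∀ B : ℝ, c ≤ B →
      ∫ x in c..B, F x ≤ 1 / (2 * ε ^ 2) + 3 / 2 * Real.sqrt a / ε ^ 2 := by
    intro B hB
    have hB0 : 0 ≤ B := le_trans hc0 hB
    set d : ℝ := Real.sqrt B with hd
    have hrd : r ≤ d := by
      rw [hd, ← Real.sqrt_sq hr0.le, hr2]; exact Real.sqrt_le_sqrt hB
    set G : ℝ → ℝ := fun u => exp (-2 * (u * ε - Real.sqrt a) ^ 2) with hG
    have hGcont : Continuous G := by
      apply Real.continuous_exp.comp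
      exact continuous_const.mul (((continuous_id.mul continuous_const).sub
        continuous_const).pow 2)
    have hsub : ∫ x in c..B, F x = ∫ u in r..d, 2 * u * G u := by
      have h1 : ∫ u in r..d, (2 * u) • (F ∘ (fun u => u ^ 2)) u =
          ∫ x in (r^2)..(d^2), F x := by
        apply intervalIntegral.integral_comp_smul_deriv
          (f := fun u : ℝ => u ^ 2) (f' := fun u => 2 * u)
        · intro x _; simpa using hasDerivAt_pow 2 x
        · exact (continuous_const.mul continuous_id).continuousOn
        · exact hFcont
      rw [hr2] at h1
      rw [hd, Real.sq_sqrt hB0] at h1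
      rw [← h1]
      apply intervalIntegral.integral_congr
      intro u hu
      have hu0 : 0 ≤ u := by
        rcases Set.mem_uIcc.1 hu with h | h
        · exact le_trans hr0.le h.1
        · exact le_trans (le_trans hr0.le hrd) h.1
      simp only [Function.comp, smul_eq_mul, hF, hG]
      rw [Real.sqrt_sq hu0]
    have hsplit : ∫ u in r..d, 2 * u * G u =
        (∫ u in r..d, 2 * (u - r) * G u) + ∫ u in r..d, 2 * r * G u := by
      rw [← intervalIntegral.integral_add]
      · apply intervalIntegral.integral_congr; intro u _; ring
      · exact ((continuous_const.mul ((continuous_id.sub continuous_const))).mul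
          hGcont).intervalIntegrable _ _
      · exact (continuous_const.mul hGcont).intervalIntegrable _ _
    have hpart1 : ∫ u in r..d, 2 * (u - r) * G u ≤ 1 / (2 * ε ^ 2) := by
      have hderiv : ∀ u ∈ Set.uIcc r d,
          HasDerivAt (fun u => -(1 / (2 * ε ^ 2)) * G u) (2 * (u - r) * G u) u := by
        intro u _
        have h1 : HasDerivAt (fun u : ℝ => -2 * (u * ε - Real.sqrt a) ^ 2)
            (-2 * (2 * (u * ε - Real.sqrt a) * ε)) u := by
          have := ((((hasDerivAt_id u).mul_const ε).sub_const (Real.sqrt a)).pow 2).const_mul (-2)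
          simpa using this
        have h2 := (h1.exp).const_mul (-(1 / (2 * ε ^ 2)))
        have heq : 2 * (u - r) * G u =
            -(1 / (2 * ε ^ 2)) * (Real.exp (-2 * (u * ε - Real.sqrt a) ^ 2) *
              (-2 * (2 * (u * ε - Real.sqrt a) * ε))) := by
          show 2 * (u - r) * Real.exp (-2 * (u * ε - Real.sqrt a) ^ 2) = _
          rw [hr]
          field_simp
        rw [heq]
        exact h2
      have heq : ∫ u in r..d, 2 * (u - r) * G u =
          (-(1 / (2 * ε ^ 2)) * G d) - (-(1 / (2 * ε ^ 2)) * G r) := by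
        exact intervalIntegral.integral_eq_sub_of_hasDerivAt hderiv
          (((continuous_const.mul (continuous_id.sub continuous_const)).mul
            hGcont).intervalIntegrable _ _)
      rw [heq]
      have hGr : G r = 1 := by
        rw [hG]; simp only []
        have : r * ε - Real.sqrt a = 0 := by rw [hr]; field_simp; simp
        rw [this]; simp
      rw [hGr]
      have hGd : 0 ≤ G d := (exp_pos _).le
      nlinarith [mul_nonneg (show (0:ℝ) ≤ 1/(2*ε^2) by positivity) hGd]
    have hpart2 : ∫ u in r..d, 2 * r * G u ≤ 3 / 2 * Real.sqrt a / ε ^ 2 := by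
      have hGshift : ∀ u : ℝ, G u = (fun v => exp (-(2 * ε ^ 2) * v ^ 2)) (u - r) := by
        intro u
        rw [hG]; simp only []
        congr 1
        have : u * ε - Real.sqrt a = ε * (u - r) := by rw [hr]; field_simp
        rw [this]; ring
      have h1 : ∫ u in r..d, G u = ∫ v in (0:ℝ)..(d - r), exp (-(2 * ε ^ 2) * v ^ 2) := by
        rw [show (0:ℝ) = r - r by ring]
        rw [← intervalIntegral.integral_comp_sub_right _ r]
        apply intervalIntegral.integral_congr
        intro u _; exact hGshift u
      have hgauss_int : Integrable (fun v : ℝ => exp (-(2 * ε ^ 2) * v ^ 2)) :=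
        integrable_exp_neg_mul_sq (by positivity)
      have h2 : ∫ v in (0:ℝ)..(d - r), exp (-(2 * ε ^ 2) * v ^ 2) ≤
          ∫ v in Set.Ioi (0:ℝ), exp (-(2 * ε ^ 2) * v ^ 2) := by
        rw [intervalIntegral.integral_of_le (by linarith)]
        apply setIntegral_mono_set hgauss_int.integrableOn
          (ae_of_all _ fun v => (exp_pos _).le)
        exact HasSubset.Subset.eventuallyLE Set.Ioc_subset_Ioi_self
      have h3 : ∫ v in Set.Ioi (0:ℝ), exp (-(2 * ε ^ 2) * v ^ 2) =
          Real.sqrt (π / (2 * ε ^ 2)) / 2 := integral_gaussian_Ioi _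
      have h4 : Real.sqrt (π / (2 * ε ^ 2)) ≤ 3 / (2 * ε) := by
        rw [show 3 / (2 * ε) = Real.sqrt ((3 / (2 * ε)) ^ 2) from
          (Real.sqrt_sq (by positivity)).symm]
        apply Real.sqrt_le_sqrt
        rw [div_pow]
        rw [div_le_div_iff₀ (by positivity) (by positivity)]
        nlinarith [Real.pi_le_four, sq_nonneg ε]
      rw [intervalIntegral.integral_const_mul, h1]
      calc 2 * r * ∫ v in (0:ℝ)..(d - r), exp (-(2 * ε ^ 2) * v ^ 2)
          ≤ 2 * r * (Real.sqrt (π / (2 * ε ^ 2)) / 2) := by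
            apply mul_le_mul_of_nonneg_left (h2.trans_eq h3) (by positivity)
        _ ≤ 2 * r * (3 / (2 * ε) / 2) := by
            apply mul_le_mul_of_nonneg_left (by linarith) (by positivity)
        _ = 3 / 2 * Real.sqrt a / ε ^ 2 := by rw [hr]; field_simp
    rw [hsub, hsplit]
    linarith
  -- now the sum manipulation
  by_cases hTk : T ≤ k
  · calc ∑ t ∈ Finset.Icc 1 T, p t ≤ ∑ _t ∈ Finset.Icc 1 T, (1:ℝ) :=
        Finset.sum_le_sum fun t _ => hple t
      _ = T := by simp
      _ ≤ k := by exact_mod_cast hTk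
      _ ≤ c := hkc
      _ ≤ 3 * a / ε ^ 2 := by rw [hc]; gcongr; linarith
  · push_neg at hTk
    have hkT : k + 1 ≤ T := hTk
    -- split
    have hsplit : ∑ t ∈ Finset.Icc 1 T, p t =
        (∑ t ∈ Finset.Ioc 0 k, p t) + ∑ t ∈ Finset.Ioc k T, p t := by
      rw [show Finset.Icc 1 T = Finset.Ioc 0 T from by rw [← Finset.Icc_add_one_left_eq_Ioc, zero_add]]
      exact (Finset.sum_Ioc_consecutive _ (Nat.zero_le k) (le_of_lt hTk)).symm
    have hhead : ∑ t ∈ Finset.Ioc 0 k, p t ≤ k := by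
      calc ∑ t ∈ Finset.Ioc 0 k, p t ≤ ∑ _t ∈ Finset.Ioc 0 k, (1:ℝ) :=
          Finset.sum_le_sum fun t _ => hple t
        _ = k := by simp
    have hFsum : ∑ t ∈ Finset.Ioc k T, p t ≤ ∑ t ∈ Finset.Ioc k T, F t := by
      apply Finset.sum_le_sum
      intro t ht
      have ht1 : k + 1 ≤ t := (Finset.mem_Ioc.1 ht).1
      have htc : c ≤ (t:ℝ) := by
        calc c ≤ (k:ℝ) + 1 := hck.le
          _ ≤ t := by exact_mod_cast ht1
      exact hpf t (by rw [hc] at htc; rw [div_le_iff₀ hε2] at htc; linarith)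
    have htail : ∑ t ∈ Finset.Ioc k T, F t = F (k+1 : ℕ) + ∑ t ∈ Finset.Ioc (k+1) T, F t := by
      rw [← Finset.sum_Ioc_consecutive _ (Nat.le_succ k) hkT,
        show Finset.Ioc k (k+1) = {k+1} from by rw [← Finset.Icc_add_one_left_eq_Ioc, Finset.Icc_self],
        Finset.sum_singleton]
    -- tail sum vs integral
    have htail2 : ∑ t ∈ Finset.Ioc (k+1) T, F (t:ℝ) ≤ ∫ x in ((k+1:ℕ):ℝ)..(T:ℝ), F x := by
      have hmap : Finset.Ioc (k+1) T = Finset.map (addRightEmbedding 1) (Finset.Ico (k+1) T) := by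
        rw [Finset.map_add_right_Ico, Finset.Ico_add_one_right_eq_Icc, Finset.Icc_add_one_left_eq_Ioc]
      rw [hmap, Finset.sum_map]
      simp only [addRightEmbedding_apply]
      refine AntitoneOn.sum_le_integral_Ico hkT ?_
      intro u hu v hv huv
      apply hant u v ?_ huv
      calc c ≤ (k:ℝ) + 1 := hck.le
        _ ≤ u := by exact_mod_cast hu.1
    -- constant piece
    have hconst : ((k:ℝ) + 1 - c) * F (k+1:ℕ) ≤ ∫ x in c..((k+1:ℕ):ℝ), F x := by
      have h1 : ∫ x in c..((k+1:ℕ):ℝ), (F (k+1:ℕ) : ℝ) = ((k:ℝ)+1 - c) * F (k+1:ℕ) := by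
        rw [intervalIntegral.integral_const, smul_eq_mul]
        congr 1
        push_cast; ring
      rw [← h1]
      apply intervalIntegral.integral_mono_on (by push_cast; linarith)
        (intervalIntegrable_const) (hFcont.intervalIntegrable _ _)
      exact fun x hx => hant x _ hx.1 hx.2
    -- combine integrals
    have hglue : (∫ x in c..((k+1:ℕ):ℝ), F x) + (∫ x in ((k+1:ℕ):ℝ)..(T:ℝ), F x) =
        ∫ x in c..(T:ℝ), F x :=
      intervalIntegral.integral_add_adjacent_intervals
        (hFcont.intervalIntegrable _ _) (hFcont.intervalIntegrable _ _)
    have hint : ∫ x in c..(T:ℝ), F x ≤ 1 / (2 * ε ^ 2) + 3 / 2 * Real.sqrt a / ε ^ 2 := by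
      apply intbound
      calc c ≤ (k:ℝ) + 1 := hck.le
        _ ≤ T := by exact_mod_cast hkT
    -- F(k+1) ≤ (c - k) + (k+1-c) F(k+1)
    have hfk : F (k+1:ℕ) ≤ (c - k) + ((k:ℝ) + 1 - c) * F (k+1:ℕ) := by
      have h1 := hF1 ((k+1:ℕ):ℝ)
      have h2 := hF0 ((k+1:ℕ):ℝ)
      nlinarith [hkc, hck]
    -- final assembly
    have final : ∑ t ∈ Finset.Icc 1 T, p t ≤
        c + (1 / (2 * ε ^ 2) + 3 / 2 * Real.sqrt a / ε ^ 2) := by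
      rw [hsplit]
      have := htail2
      calc (∑ t ∈ Finset.Ioc 0 k, p t) + ∑ t ∈ Finset.Ioc k T, p t
          ≤ (k:ℝ) + (F (k+1:ℕ) + ∑ t ∈ Finset.Ioc (k+1) T, F t) := by
            rw [← htail]; exact add_le_add hhead hFsum
        _ ≤ (k:ℝ) + ((c - k) + ((k:ℝ) + 1 - c) * F (k+1:ℕ) + ∫ x in ((k+1:ℕ):ℝ)..(T:ℝ), F x) := by
            apply add_le_add_right
            have := add_le_add hfk htail2
            linarith
        _ ≤ (k:ℝ) + ((c - k) + (∫ x in c..((k+1:ℕ):ℝ), F x) + ∫ x in ((k+1:ℕ):ℝ)..(T:ℝ), F x) := by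
            apply add_le_add_right
            have := hconst
            linarith
        _ = c + ∫ x in c..(T:ℝ), F x := by rw [← hglue]; ring
        _ ≤ c + (1 / (2 * ε ^ 2) + 3 / 2 * Real.sqrt a / ε ^ 2) := by linarith
    calc ∑ t ∈ Finset.Icc 1 T, p t
        ≤ c + (1 / (2 * ε ^ 2) + 3 / 2 * Real.sqrt a / ε ^ 2) := final
      _ ≤ 3 * a / ε ^ 2 := by
        have heq : c + (1 / (2 * ε ^ 2) + 3 / 2 * Real.sqrt a / ε ^ 2) =
            (a + 1 / 2 + 3 / 2 * Real.sqrt a) / ε ^ 2 := by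
          rw [hc]; field_simp; ring
        rw [heq]
        gcongr
        nlinarith [hsa1, hsaa]

end Stmt7Aux

open Real

/-- Expected overestimation count: for independent rewards in `[0,1]` with common mean
`μ`, the expected number of rounds `t ≤ T` where the empirical mean plus bonus `√(a/t)`
overestimates `μ` by at least `ε` is at most `3a/ε²`. -/
theorem stmt7
    {Ω : Type*} [MeasureSpace Ω] [IsProbabilityMeasure (ℙ : Measure Ω)]
    (X : ℕ → Ω → ℝ) (μ : ℝ)
    (hmeas : ∀ s, Measurable (X s))
    (hindep : iIndepFun X ℙ)
    (hbound : ∀ s, ∀ᵐ ω ∂ℙ, X s ω ∈ Set.Icc (0 : ℝ) 1)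
    (hmean : ∀ s, ∫ ω, X s ω ∂ℙ = μ)
    (a ε : ℝ) (ha : 1 < a) (hε : ε ∈ Set.Ioo (0 : ℝ) 1)
    (T : ℕ) (hT : 1 < T)
    (κ : Ω → ℝ)
    (hκ : ∀ ω, κ ω = ∑ t ∈ Finset.Icc 1 T,
      if ε ≤ (∑ s ∈ Finset.range t, X s ω) / t + Real.sqrt (a / t) - μ then (1 : ℝ) else 0) :
    ∫ ω, κ ω ∂ℙ ≤ 3 * a / ε ^ 2 := by
  obtain ⟨hε0, hε1⟩ := hε
  -- the event sets
  set A : ℕ → Set Ω := fun t =>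
    {ω | ε ≤ (∑ s ∈ Finset.range t, X s ω) / t + Real.sqrt (a / t) - μ} with hA
  have hAmeas : ∀ t, MeasurableSet (A t) := by
    intro t
    apply measurableSet_le measurable_const
    apply Measurable.sub ?_ measurable_const
    apply Measurable.add ?_ measurable_const
    exact (Finset.measurable_sum _ fun s _ => hmeas s).div_const _
  -- integral of κ
  have hκint : ∫ ω, κ ω ∂ℙ = ∑ t ∈ Finset.Icc 1 T, (ℙ (A t)).toReal := by
    have hfun : κ = fun ω => ∑ t ∈ Finset.Icc 1 T, (A t).indicator (fun _ => (1:ℝ)) ω := by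
      funext ω
      rw [hκ ω]
      refine Finset.sum_congr rfl fun t _ => ?_
      rw [Set.indicator_apply]
      rfl
    rw [hfun, integral_finset_sum]
    · refine Finset.sum_congr rfl fun t _ => ?_
      rw [integral_indicator_const _ (hAmeas t)]
      simp [measureReal_def]
    · exact fun t _ => (integrable_const (1:ℝ)).indicator (hAmeas t)
  rw [hκint]
  apply stmt7_sumbound a ε ha hε0 hε1 T
  · intro t
    simpa using ENNReal.toReal_mono ENNReal.one_ne_top
      (prob_le_one (μ := (ℙ : Measure Ω)) (s := A t))
  · intro t ht
    -- t ≥ 1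
    have ht0 : (0:ℝ) < t := by
      rcases Nat.eq_zero_or_pos t with h | h
      · subst h; simp at ht; linarith
      · exact_mod_cast h
    set st : ℝ := Real.sqrt t with hst
    set sa : ℝ := Real.sqrt a with hsa
    have hst2 : st ^ 2 = (t:ℝ) := Real.sq_sqrt ht0.le
    have hsa2 : sa ^ 2 = a := Real.sq_sqrt (by linarith)
    have hst0 : 0 < st := Real.sqrt_pos.2 ht0
    have hsa0 : 0 < sa := Real.sqrt_pos.2 (by linarith)
    -- rewrite the event
    have hev : A t = {ω | (t:ℝ) * (μ + ε) - sa * st ≤ ∑ s ∈ Finset.range t, X s ω} := by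
      rw [hA]
      ext ω
      simp only [Set.mem_setOf_eq]
      have hsqrt_div : Real.sqrt (a / t) = sa / st := by
        rw [hsa, hst]; exact Real.sqrt_div (by linarith) _
      rw [hsqrt_div]
      have heq2 : (ε - sa/st + μ) * t = (t:ℝ)*(μ+ε) - sa*st := by
        rw [← hst2]; field_simp; ring
      constructor
      · intro h
        have h2 : ε - sa/st + μ ≤ (∑ s ∈ Finset.range t, X s ω) / t := by linarith
        rw [le_div_iff₀ ht0] at h2
        linarith [heq2]
      · intro h
        have h2 : (ε - sa/st + μ) * t ≤ ∑ s ∈ Finset.range t, X s ω := by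
          rw [heq2]; linarith
        rw [← le_div_iff₀ ht0] at h2
        linarith
    rw [hev]
    -- Chernoff with optimized lambda
    have hx0 : 0 ≤ (t:ℝ) * ε - sa * st := by
      have h1 : a * t ≤ ((t:ℝ) * ε) ^ 2 := by
        have : a ≤ t * ε ^ 2 := ht
        nlinarith
      have h2 : sa * st = Real.sqrt (a * t) := by
        rw [hsa, hst, ← Real.sqrt_mul (by linarith)]
      rw [h2]
      have h3 : Real.sqrt (a * t) ≤ Real.sqrt (((t:ℝ) * ε) ^ 2) := Real.sqrt_le_sqrt h1
      rw [Real.sqrt_sq (by positivity)] at h3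
      linarith
    set l : ℝ := 4 * ((t:ℝ) * ε - sa * st) / t with hl
    have hl0 : 0 ≤ l := by positivity
    have hch := stmt7_chernoff X μ hmeas hindep hbound hmean t l ((t:ℝ) * (μ + ε) - sa * st) hl0
    refine le_trans hch (le_of_eq ?_)
    congr 1
    rw [hl]
    have htst : (t:ℝ) = st ^ 2 := hst2.symm
    rw [htst]
    field_simp
    ring
end

section
/- Let $k_A \geq 1$ be an integer and let $\mu_1 \leq \mu_2 \leq \cdots \leq \mu_{k_A}$ be reals in $[0,1]$ with average $\bar\mu = \frac{1}{k_A}\sum_{i=1}^{k_A} \mu_i$. Let $\Delta > 0$ and define $D = \{i \in [k_A] : \mu_i \leq \bar\mu + \frac{3\Delta}{4 k_A}\}$. If $|D| \leq \lfloor k_A/2 \rfloor$, then there exists $1 \leq \ell \leq \lfloor \log_2 k_A \rfloor$ such that $\bar\mu - \mu_{\lfloor k_A/2^{\ell} \rfloor} \geq \frac{(\sqrt{2})^{\ell}}{16}\cdot\frac{\Delta}{k_A}$. -/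
set_option maxHeartbeats 1000000

/-- Action-partitioning lemma: if few arms of a suboptimal action are near the average,
then some dyadic quantile arm is far below the average. -/
theorem stmt9 (k : ℕ) (hk : 1 ≤ k) (μ : ℕ → ℝ)
    (hmono : ∀ i ∈ Finset.Icc 1 k, ∀ j ∈ Finset.Icc 1 k, i ≤ j → μ i ≤ μ j)
    (hrange : ∀ i ∈ Finset.Icc 1 k, μ i ∈ Set.Icc (0 : ℝ) 1)
    (Δ : ℝ) (hΔ : 0 < Δ)
    (bar : ℝ) (hbar : bar = (∑ i ∈ Finset.Icc 1 k, μ i) / k)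
    (hD : ((Finset.Icc 1 k).filter (fun i => μ i ≤ bar + 3 * Δ / (4 * k))).card ≤ k / 2) :
    ∃ ℓ : ℕ, 1 ≤ ℓ ∧ ℓ ≤ Nat.log 2 k ∧
      bar - μ (k / 2 ^ ℓ) ≥ (Real.sqrt 2) ^ ℓ / 16 * (Δ / k) := by
  by_contra hcontra
  push_neg at hcontra
  have hk0 : (0:ℝ) < k := by exact_mod_cast hk
  set n := k / 2 with hn
  clear_value n
  have hnk : n + 1 ≤ k := by omega
  have hμn1 : bar + 3 * Δ / (4 * k) < μ (n + 1) := by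
    by_contra hle
    push_neg at hle
    have hsub : Finset.Icc 1 (n + 1) ⊆
        (Finset.Icc 1 k).filter (fun i => μ i ≤ bar + 3 * Δ / (4 * k)) := by
      intro i hi
      rw [Finset.mem_Icc] at hi
      rw [Finset.mem_filter, Finset.mem_Icc]
      refine ⟨⟨hi.1, hi.2.trans hnk⟩, ?_⟩
      exact le_trans (hmono i (by rw [Finset.mem_Icc]; omega) (n+1)
        (by rw [Finset.mem_Icc]; omega) hi.2) hle
    have hcard := Finset.card_le_card hsub
    rw [Nat.card_Icc] at hcard
    omega
  have hksum : ∑ i ∈ Finset.Icc 1 k, μ i = k * bar := by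
    rw [hbar]; field_simp
  have htot : ∑ i ∈ Finset.Icc 1 k, (μ i - bar) = 0 := by
    rw [Finset.sum_sub_distrib, hksum, Finset.sum_const, Nat.card_Icc, nsmul_eq_mul]
    simp
  have hsplit : (∑ i ∈ Finset.Icc 1 n, (bar - μ i))
      = ∑ i ∈ Finset.Icc (n+1) k, (μ i - bar) := by
    have hu := Finset.sum_Ioc_consecutive (fun i => μ i - bar) (Nat.zero_le n) (by omega : n ≤ k)
    rw [show Finset.Ioc 0 n = Finset.Icc 1 n from (Finset.Icc_add_one_left_eq_Ioc 0 n).symm,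
        show Finset.Ioc n k = Finset.Icc (n+1) k from (Finset.Icc_add_one_left_eq_Ioc n k).symm,
        show Finset.Ioc 0 k = Finset.Icc 1 k from (Finset.Icc_add_one_left_eq_Ioc 0 k).symm, htot] at hu
    have hA : ∑ i ∈ Finset.Icc 1 n, (bar - μ i)
        = - ∑ i ∈ Finset.Icc 1 n, (μ i - bar) := by
      rw [← Finset.sum_neg_distrib]
      exact Finset.sum_congr rfl (fun i _ => by ring)
    rw [hA]; linarith
  have hlow : ∀ i ∈ Finset.Icc (n+1) k, 3 * Δ / (4 * k) ≤ μ i - bar := by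
    intro i hi
    rw [Finset.mem_Icc] at hi
    have := hmono (n+1) (by rw [Finset.mem_Icc]; omega) i (by rw [Finset.mem_Icc]; omega) hi.1
    linarith
  have hS : 3 * Δ / 8 ≤ ∑ i ∈ Finset.Icc 1 n, (bar - μ i) := by
    rw [hsplit]
    have h1 := Finset.card_nsmul_le_sum _ _ _ hlow
    rw [Nat.card_Icc, nsmul_eq_mul] at h1
    have hcastn : ((n:ℕ):ℝ) ≤ (k:ℝ) / 2 := by
      rw [hn]
      exact_mod_cast Nat.cast_div_le
    have hcast : ((k + 1 - (n+1) : ℕ) : ℝ) = (k:ℝ) - n := by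
      have h2 : n + 1 ≤ k := hnk
      push_cast [show k + 1 - (n+1) = k - n from by omega, show n ≤ k from by omega]
      ring
    rw [hcast] at h1
    have hpos : 0 < 3 * Δ / (4 * k) := by positivity
    have h3 : (k:ℝ)/2 * (3 * Δ / (4 * k)) ≤ ((k:ℝ) - n) * (3 * Δ / (4 * k)) := by
      apply mul_le_mul_of_nonneg_right (by linarith) (le_of_lt hpos)
    have h4 : (k:ℝ)/2 * (3 * Δ / (4 * k)) = 3 * Δ / 8 := by
      field_simp; ring
    linarith
  rcases Nat.lt_or_ge k 2 with hk2 | hk2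
  · have hn0 : n = 0 := by omega
    rw [hn0] at hS
    simp [Finset.Icc_eq_empty (by omega : ¬ (1:ℕ) ≤ 0)] at hS
    linarith
  · set L := Nat.log 2 k with hL
    clear_value L
    have hL1 : 1 ≤ L := by
      rw [hL]
      exact (Nat.le_log_iff_pow_le (by norm_num) (by omega)).mpr (by simpa using hk2)
    have hpowL : 2 ^ L ≤ k := by rw [hL]; exact Nat.pow_log_le_self 2 (by omega)
    have hpowL2 : k < 2 ^ (L + 1) := by rw [hL]; exact Nat.lt_pow_succ_log_self (by norm_num) k
    have hquant : k / 2 ^ L = 1 := by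
      have h1 : 1 ≤ k / 2 ^ L := (Nat.one_le_div_iff (by positivity)).mpr hpowL
      have h2 : k / 2 ^ L < 2 := by
        rw [Nat.div_lt_iff_lt_mul (by positivity)]
        rw [pow_succ] at hpowL2
        omega
      omega
    set s := Real.sqrt 2 with hsdef
    clear_value s
    have hs0 : 0 < s := by rw [hsdef]; positivity
    have hs2 : s ^ 2 = 2 := by rw [hsdef]; exact Real.sq_sqrt (by norm_num)
    have key : ∀ d m, 1 ≤ m → m + d = L →
        ∑ i ∈ Finset.Icc 1 (k / 2 ^ m), (bar - μ i)
          ≤ Δ / 16 * (1 + (2 + s) * s / s ^ m) := by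
      intro d
      induction d with
      | zero =>
        intro m hm1 hmL
        have hmeq : m = L := by omega
        subst hmeq
        rw [hquant, Finset.Icc_self, Finset.sum_singleton]
        have h1 := hcontra m hL1 le_rfl
        rw [hquant] at h1
        have hsle2 : s ≤ 2 := by nlinarith [hs2, hs0]
        have hsL : s ^ m ≤ (k : ℝ) := by
          calc s ^ m ≤ 2 ^ m := pow_le_pow_left₀ hs0.le hsle2 m
            _ ≤ (k:ℝ) := by exact_mod_cast hpowL
        have hfrac : s ^ m / (k:ℝ) ≤ 1 := (div_le_one hk0).mpr hsL
        have hx : 0 ≤ (2 + s) * s / s ^ m := by positivity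
        have he : s ^ m / 16 * (Δ / k) = Δ / 16 * (s ^ m / k) := by ring
        nlinarith [mul_nonneg (by linarith : (0:ℝ) ≤ Δ/16) (by linarith : (0:ℝ) ≤ 1 - s^m/k),
          mul_nonneg (by linarith : (0:ℝ) ≤ Δ/16) hx]
      | succ d ih =>
        intro m hm1 hmL
        have hIH := ih (m + 1) (by omega) (by omega)
        have hm1L : m + 1 ≤ L := by omega
        have hpm : 2 ^ (m+1) ≤ k := le_trans (Nat.pow_le_pow_right (by norm_num) hm1L) hpowL
        have ha1 : 1 ≤ k / 2 ^ (m+1) := (Nat.one_le_div_iff (by positivity)).mpr hpm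
        have hab : k / 2 ^ (m+1) ≤ k / 2 ^ m := by
          rw [pow_succ, ← Nat.div_div_eq_div_mul]
          exact Nat.div_le_self _ _
        have hbk : k / 2 ^ m ≤ k := Nat.div_le_self _ _
        have hsplit2 : ∑ i ∈ Finset.Icc 1 (k / 2 ^ m), (bar - μ i)
            = ∑ i ∈ Finset.Icc 1 (k / 2 ^ (m+1)), (bar - μ i)
              + ∑ i ∈ Finset.Ioc (k / 2 ^ (m+1)) (k / 2 ^ m), (bar - μ i) := by
          have hu := Finset.sum_Ioc_consecutive (fun i => bar - μ i)
            (Nat.zero_le (k / 2 ^ (m+1))) hab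
          rw [show Finset.Ioc 0 (k / 2^(m+1)) = Finset.Icc 1 (k / 2^(m+1)) from
                (Finset.Icc_add_one_left_eq_Ioc 0 _).symm,
              show Finset.Ioc 0 (k / 2^m) = Finset.Icc 1 (k / 2^m) from
                (Finset.Icc_add_one_left_eq_Ioc 0 _).symm] at hu
          linarith
        have hcon1 := hcontra (m+1) (by omega) hm1L
        have hblock : ∀ i ∈ Finset.Ioc (k / 2^(m+1)) (k / 2^m),
            bar - μ i ≤ s^(m+1)/16*(Δ/k) := by
          intro i hi
          rw [Finset.mem_Ioc] at hi
          have := hmono (k / 2^(m+1)) (by rw [Finset.mem_Icc]; exact ⟨ha1, le_trans hab hbk⟩)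
            i (by rw [Finset.mem_Icc]; omega) (by omega)
          linarith
        have hsum2 := Finset.sum_le_card_nsmul _ _ _ hblock
        rw [Nat.card_Ioc, nsmul_eq_mul] at hsum2
        have hcount : ((k / 2^m - k / 2^(m+1) : ℕ) : ℝ) ≤ (k:ℝ) / 2^m := by
          calc ((k / 2^m - k / 2^(m+1) : ℕ) : ℝ) ≤ ((k / 2^m : ℕ) : ℝ) := by
                exact_mod_cast Nat.sub_le _ _
            _ ≤ (k:ℝ) / 2^m := by exact_mod_cast Nat.cast_div_le
        have hc0 : (0:ℝ) ≤ s^(m+1)/16*(Δ/k) := by positivity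
        have hstep : ∑ i ∈ Finset.Ioc (k/2^(m+1)) (k/2^m), (bar - μ i)
            ≤ (k:ℝ)/2^m * (s^(m+1)/16*(Δ/k)) :=
          le_trans hsum2 (mul_le_mul_of_nonneg_right hcount hc0)
        have hsm : (0:ℝ) < s^m := pow_pos hs0 m
        have h2m : ((2:ℝ))^m = (s^m)^2 := by
          rw [← pow_mul, ← hs2, ← pow_mul, mul_comm]
        have hnum : Δ/16 * (1 + (2+s)*s/s^(m+1)) + (k:ℝ)/2^m * (s^(m+1)/16*(Δ/k))
            ≤ Δ/16 * (1 + (2+s)*s/s^m) := by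
          have e1 : (2+s)*s/s^(m+1) = (2+s)/s^m := by
            rw [pow_succ]; field_simp
          have e2 : (k:ℝ)/2^m * (s^(m+1)/16*(Δ/k)) = s*Δ/(16*s^m) := by
            rw [h2m, pow_succ]; field_simp; ring
          have e3 : (2+s)*s = 2*s + 2 := by linear_combination hs2
          rw [e1, e2, e3]
          apply le_of_eq
          field_simp
          ring
        rw [hsplit2]
        linarith
    have hkey := key (L - 1) 1 le_rfl (by omega)
    rw [pow_one, pow_one] at hkey
    have hdiv : (2 + s) * s / s = 2 + s := by field_simp
    rw [hdiv] at hkey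
    have hs3 : s < 3 := by nlinarith [hs2, hs0]
    rw [← hn] at hkey
    nlinarith [hS, hkey, hΔ, hs3]
end

section
/- Let $k_A \geq 1$ be an integer and $\Delta > 0$. Suppose $\mu_1 \leq \cdots \leq \mu_{k_A}$ are reals with average $\bar\mu$ such that $\bar\mu - \mu_{\lfloor k_A/2^{\ell}\rfloor} < \frac{(\sqrt{2})^{\ell}}{16}\cdot\frac{\Delta}{k_A}$ for all $1 \leq \ell \leq \lfloor \log_2 k_A \rfloor$. Then $\sum_{i=1}^{\lfloor k_A/2 \rfloor}(\bar\mu - \mu_i) < \frac{\Delta}{8} + \frac{(\sqrt{2}+1)\Delta}{16\sqrt{k_A}} < \frac{3\Delta}{8}$ when $k_A \geq 2$. -/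
lemma my_sqrt_pow (x : ℝ) (hx : 0 ≤ x) (n : ℕ) :
    Real.sqrt x ^ n = Real.sqrt (x ^ n) := by
  induction n with
  | zero => simp
  | succ n ih => rw [pow_succ, pow_succ, Real.sqrt_mul (pow_nonneg hx _), ih]

lemma my_sum_one_div_sqrt (n : ℕ) :
    ∑ i ∈ Finset.Icc 1 n, (1 : ℝ) / Real.sqrt i ≤ 2 * Real.sqrt n := by
  induction n with
  | zero => simp
  | succ n ih =>
    rw [Finset.sum_Icc_succ_top (by omega)]
    have h2 : (0:ℝ) < Real.sqrt (n+1) := Real.sqrt_pos.mpr (by positivity)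
    have ha : Real.sqrt (n:ℝ) ^ 2 = (n:ℝ) := Real.sq_sqrt (by positivity)
    have hb : Real.sqrt ((n:ℝ)+1) ^ 2 = (n:ℝ)+1 := Real.sq_sqrt (by positivity)
    have ha0 : (0:ℝ) ≤ Real.sqrt n := Real.sqrt_nonneg _
    have hstep : (1:ℝ) / Real.sqrt ((n:ℝ)+1)
        ≤ 2 * Real.sqrt ((n:ℝ)+1) - 2 * Real.sqrt n := by
      rw [div_le_iff₀ h2]
      nlinarith [sq_nonneg (Real.sqrt n - Real.sqrt ((n:ℝ)+1))]
    have hcast : ((n+1 : ℕ) : ℝ) = (n:ℝ) + 1 := by push_cast; ring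
    rw [hcast]
    linarith

/-- Contradiction chain in the action-partitioning lemma: if all dyadic quantiles are
close to the average, the total deviation of the lower half is small. -/
theorem stmt11 (k : ℕ) (hk : 2 ≤ k) (μ : ℕ → ℝ)
    (hmono : ∀ i ∈ Finset.Icc 1 k, ∀ j ∈ Finset.Icc 1 k, i ≤ j → μ i ≤ μ j)
    (Δ : ℝ) (hΔ : 0 < Δ)
    (bar : ℝ) (hbar : bar = (∑ i ∈ Finset.Icc 1 k, μ i) / k)
    (hsmall : ∀ ℓ : ℕ, 1 ≤ ℓ → ℓ ≤ Nat.log 2 k →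
      bar - μ (k / 2 ^ ℓ) < (Real.sqrt 2) ^ ℓ / 16 * (Δ / k)) :
    (∑ i ∈ Finset.Icc 1 (k / 2), (bar - μ i)
        < Δ / 8 + (Real.sqrt 2 + 1) * Δ / (16 * Real.sqrt k)) ∧
    Δ / 8 + (Real.sqrt 2 + 1) * Δ / (16 * Real.sqrt k) < 3 * Δ / 8 := by
  have hk0 : (0:ℝ) < k := by positivity
  have hsk : (0:ℝ) < Real.sqrt k := Real.sqrt_pos.mpr hk0
  have hkk : Real.sqrt k * Real.sqrt k = (k:ℝ) := Real.mul_self_sqrt hk0.le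
  have hsk1 : (1:ℝ) ≤ Real.sqrt k := Real.one_le_sqrt.mpr (by exact_mod_cast (by omega : 1 ≤ k))
  have hs2 : Real.sqrt 2 ≤ 2 := by
    nlinarith [Real.sq_sqrt (by norm_num : (0:ℝ) ≤ 2), Real.sqrt_nonneg 2]
  have hs2pos : (0:ℝ) < Real.sqrt 2 := Real.sqrt_pos.mpr (by norm_num)
  constructor
  · -- pointwise bound
    have key : ∀ i ∈ Finset.Icc 1 (k/2), bar - μ i
        < Real.sqrt 2 * Δ / (16 * Real.sqrt k) * (1 / Real.sqrt i) := by
      intro i hi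
      obtain ⟨hi1, hi2⟩ := Finset.mem_Icc.mp hi
      have hik : i ≤ k := le_trans hi2 (Nat.div_le_self k 2)
      set ℓ := Nat.log 2 (k / (i+1)) + 1 with hℓdef
      have hℓ1 : 1 ≤ ℓ := by omega
      have hlogk : 1 ≤ Nat.log 2 k := Nat.log_pos one_lt_two hk
      have hℓL : ℓ ≤ Nat.log 2 k := by
        have h1 : k / (i+1) ≤ k / 2 := Nat.div_le_div_left (by omega) (by omega)
        have h2 : Nat.log 2 (k / (i+1)) ≤ Nat.log 2 (k/2) := Nat.log_mono_right h1
        have h3 : Nat.log 2 (k/2) = Nat.log 2 k - 1 := Nat.log_div_base 2 k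
        omega
      have hpow : 2 ^ ℓ ≤ k :=
        le_trans (Nat.pow_le_pow_right (by norm_num) hℓL) (Nat.pow_log_le_self 2 (by omega))
      have hm1 : 1 ≤ k / 2 ^ ℓ := (Nat.one_le_div_iff (by positivity)).mpr hpow
      have hmi : k / 2 ^ ℓ ≤ i := by
        have h2 : k / (i+1) < 2 ^ ℓ := Nat.lt_pow_succ_log_self one_lt_two _
        have h4 := Nat.div_add_mod k (i+1)
        have h5 : k % (i+1) < i+1 := Nat.mod_lt _ (by omega)
        have h1 : k < (i+1) * 2 ^ ℓ := by
          have h6 : (i+1) * (k/(i+1)+1) = (i+1)*(k/(i+1)) + (i+1) := by ring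
          calc k < (i+1) * (k/(i+1)+1) := by rw [h6]; omega
            _ ≤ (i+1) * 2^ℓ := Nat.mul_le_mul_left _ h2
        have := (Nat.div_lt_iff_lt_mul (show 0 < 2^ℓ by positivity)).mpr h1
        omega
      have hmono1 : μ (k / 2^ℓ) ≤ μ i :=
        hmono _ (Finset.mem_Icc.mpr ⟨hm1, le_trans (Nat.div_le_self _ _) (le_refl k)⟩)
          i (Finset.mem_Icc.mpr ⟨hi1, hik⟩) hmi
      have hsb := hsmall ℓ hℓ1 hℓL
      -- nat inequality 2^ℓ * i ≤ 2 * k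
      have hdiv1 : 1 ≤ k / (i+1) := (Nat.one_le_div_iff (by omega)).mpr (by omega)
      have hnat : 2 ^ ℓ * i ≤ 2 * k := by
        have e1 : 2 ^ ℓ = 2 * 2 ^ (Nat.log 2 (k / (i+1))) := by
          rw [hℓdef, pow_succ]; ring
        have e2 : 2 ^ (Nat.log 2 (k / (i+1))) ≤ k / (i+1) :=
          Nat.pow_log_le_self 2 (by omega)
        have e3 : (k / (i+1)) * i ≤ k := le_trans
          (Nat.mul_le_mul_left _ (by omega : i ≤ i+1)) (Nat.div_mul_le_self k (i+1))
        calc 2 ^ ℓ * i = 2 * (2 ^ (Nat.log 2 (k / (i+1))) * i) := by rw [e1]; ring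
          _ ≤ 2 * ((k / (i+1)) * i) := by
              exact Nat.mul_le_mul_left _ (Nat.mul_le_mul_right _ e2)
          _ ≤ 2 * k := Nat.mul_le_mul_left _ e3
      have hnatR : ((2:ℝ)) ^ ℓ * (i:ℝ) ≤ 2 * (k:ℝ) := by exact_mod_cast hnat
      have hsi : (0:ℝ) < Real.sqrt i := Real.sqrt_pos.mpr (by exact_mod_cast hi1)
      have hmain : Real.sqrt 2 ^ ℓ * Real.sqrt i ≤ Real.sqrt 2 * Real.sqrt k := by
        rw [my_sqrt_pow 2 (by norm_num), ← Real.sqrt_mul (by positivity),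
          ← Real.sqrt_mul (by norm_num)]
        exact Real.sqrt_le_sqrt hnatR
      have hfin : (Real.sqrt 2) ^ ℓ / 16 * (Δ / k)
          ≤ Real.sqrt 2 * Δ / (16 * Real.sqrt k) * (1 / Real.sqrt i) := by
        rw [div_mul_div_comm, div_mul_div_comm, div_le_div_iff₀ (by positivity) (by positivity)]
        have h6 : Real.sqrt 2 ^ ℓ * Real.sqrt i * Real.sqrt k
            ≤ Real.sqrt 2 * (k:ℝ) := by
          calc Real.sqrt 2 ^ ℓ * Real.sqrt i * Real.sqrt k
              ≤ Real.sqrt 2 * Real.sqrt k * Real.sqrt k :=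
                mul_le_mul_of_nonneg_right hmain hsk.le
            _ = Real.sqrt 2 * (k:ℝ) := by rw [mul_assoc, hkk]
        nlinarith [mul_le_mul_of_nonneg_left h6 (by positivity : (0:ℝ) ≤ 16 * Δ)]
      linarith
    have hne : (Finset.Icc 1 (k/2)).Nonempty := ⟨1, Finset.mem_Icc.mpr ⟨le_refl 1, by omega⟩⟩
    have hsum := Finset.sum_lt_sum_of_nonempty hne key
    have hsum2 : ∑ i ∈ Finset.Icc 1 (k/2),
        Real.sqrt 2 * Δ / (16 * Real.sqrt k) * (1 / Real.sqrt i) ≤ Δ / 8 := by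
      rw [← Finset.mul_sum]
      have hb := my_sum_one_div_sqrt (k/2)
      have hCpos : (0:ℝ) ≤ Real.sqrt 2 * Δ / (16 * Real.sqrt k) := by positivity
      have h7 : Real.sqrt ((k/2 : ℕ) : ℝ) ≤ Real.sqrt k / Real.sqrt 2 := by
        rw [← Real.sqrt_div hk0.le]
        apply Real.sqrt_le_sqrt
        have := Nat.cast_div_le (m := k) (n := 2) (α := ℝ)
        simpa using this
      have h8 : ∑ i ∈ Finset.Icc 1 (k/2), (1:ℝ) / Real.sqrt i
          ≤ 2 * (Real.sqrt k / Real.sqrt 2) := by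
        refine le_trans hb ?_
        have := mul_le_mul_of_nonneg_left h7 (by norm_num : (0:ℝ) ≤ 2)
        linarith
      calc Real.sqrt 2 * Δ / (16 * Real.sqrt k) * ∑ i ∈ Finset.Icc 1 (k/2), (1:ℝ) / Real.sqrt i
          ≤ Real.sqrt 2 * Δ / (16 * Real.sqrt k) * (2 * (Real.sqrt k / Real.sqrt 2)) :=
            mul_le_mul_of_nonneg_left h8 hCpos
        _ = Δ / 8 := by field_simp; ring
    have hpos : (0:ℝ) ≤ (Real.sqrt 2 + 1) * Δ / (16 * Real.sqrt k) := by positivity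
    linarith
  · have h : (Real.sqrt 2 + 1) * Δ / (16 * Real.sqrt k) < Δ / 4 := by
      rw [div_lt_iff₀ (by positivity : (0:ℝ) < 16 * Real.sqrt k)]
      nlinarith [mul_nonneg hΔ.le (sub_nonneg.mpr hsk1), hs2, hΔ]
    linarith
end
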